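/- arXiv:2101.04738 — 2 statements merged into one kernel-verified Lean document; each statement's English description precedes it below -/
import Mathlib

section
/- Under Assumption 2 with ρ > 0, for any M ≥ 1 and any x ∈ ℝⁿ with ℓ_min(x) ≤ ε and V_{f,M}(x) ≤ ε, the finite-tail costs satisfy V_{f,M+1}(x) ≤ (1 + c_M) · V_{f,M}(x), where c_M := C ρ^M (1−ρ)/(1−ρ^M). -/
open Finset Filter
open scoped ENNReal

noncomputable section

open scoped Classical

/-- State/input spaces are Euclidean spaces. -/
abbrev Vec (n : ℕ) := EuclideanSpace ℝ (Fin n)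

/-- Open-loop state trajectory: `x(0) = x`, `x(k+1) = f(x(k), u(k))`. -/
def traj {n m : ℕ} (f : Vec n → Vec m → Vec n) (x : Vec n) (u : ℕ → Vec m) : ℕ → Vec n
  | 0 => x
  | k + 1 => f (traj f x u k) (u k)

/-- Closed-loop state trajectory under the feedback `κ` (the map `φ_x(·, x)`). -/
def phiX {n m : ℕ} (f : Vec n → Vec m → Vec n) (κ : Vec n → Vec m) (x : Vec n) : ℕ → Vec n
  | 0 => x
  | k + 1 => f (phiX f κ x k) (κ (phiX f κ x k))

/-- `ℓ_min(x) := inf_{u ∈ U} ℓ(x, u)`. -/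
def lmin {n m : ℕ} (ℓ : Vec n → Vec m → ℝ) (Uset : Set (Vec m)) (x : Vec n) : ℝ :=
  sInf ((fun u => ℓ x u) '' Uset)

/-- Finite-tail cost `V_{f,M}(x)`: sum of the stage cost along the κ-closed loop if the
constraints are satisfied along the tail, and `+∞` otherwise (for `M = 0` it equals `0`). -/
def Vtail {n m : ℕ} (f : Vec n → Vec m → Vec n) (κ : Vec n → Vec m)
    (ℓ : Vec n → Vec m → ℝ) (Z : Set (Vec n × Vec m)) (M : ℕ) (x : Vec n) : ℝ≥0∞ :=
  if ∀ k < M, (phiX f κ x k, κ (phiX f κ x k)) ∈ Z then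
    ENNReal.ofReal (∑ k ∈ Finset.range M, ℓ (phiX f κ x k) (κ (phiX f κ x k)))
  else ⊤

/-- Feasibility of the input sequence `u` over horizon `N` from state `x`. -/
def Feasible {n m : ℕ} (f : Vec n → Vec m → Vec n) (Z : Set (Vec n × Vec m))
    (Uset : Set (Vec m)) (N : ℕ) (x : Vec n) (u : ℕ → Vec m) : Prop :=
  ∀ k < N, u k ∈ Uset ∧ (traj f x u k, u k) ∈ Z

/-- MPC open-loop cost `J_{N,M}` of the input sequence `u` from state `x`. -/
def Jcost {n m : ℕ} (f : Vec n → Vec m → Vec n) (κ : Vec n → Vec m)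
    (ℓ : Vec n → Vec m → ℝ) (Z : Set (Vec n × Vec m)) (N M : ℕ) (x : Vec n)
    (u : ℕ → Vec m) : ℝ≥0∞ :=
  ENNReal.ofReal (∑ k ∈ Finset.range N, ℓ (traj f x u k) (u k)) +
    Vtail f κ ℓ Z M (traj f x u N)

/-- MPC value function `V_{N,M}(x)` (equal to `+∞` if the problem is infeasible). -/
def Vmpc {n m : ℕ} (f : Vec n → Vec m → Vec n) (κ : Vec n → Vec m)
    (ℓ : Vec n → Vec m → ℝ) (Z : Set (Vec n × Vec m)) (Uset : Set (Vec m))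
    (N M : ℕ) (x : Vec n) : ℝ≥0∞ :=
  ⨅ (u : ℕ → Vec m) (_ : Feasible f Z Uset N x u), Jcost f κ ℓ Z N M x u

/-- `u` is a minimizing (optimal) input sequence for `V_{N,M}(x)`. -/
def IsMinimizer {n m : ℕ} (f : Vec n → Vec m → Vec n) (κ : Vec n → Vec m)
    (ℓ : Vec n → Vec m → ℝ) (Z : Set (Vec n × Vec m)) (Uset : Set (Vec m))
    (N M : ℕ) (x : Vec n) (u : ℕ → Vec m) : Prop :=
  Feasible f Z Uset N x u ∧ Vmpc f κ ℓ Z Uset N M x = Jcost f κ ℓ Z N M x u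

/-- Infinite-horizon optimal cost `V_{∞,0}(x)`. -/
def Vinf {n m : ℕ} (f : Vec n → Vec m → Vec n) (ℓ : Vec n → Vec m → ℝ)
    (Z : Set (Vec n × Vec m)) (Uset : Set (Vec m)) (x : Vec n) : ℝ≥0∞ :=
  ⨅ (u : ℕ → Vec m) (_ : ∀ k, u k ∈ Uset ∧ (traj f x u k, u k) ∈ Z),
    ∑' k : ℕ, ENNReal.ofReal (ℓ (traj f x u k) (u k))

/-- Assumption 2 (locally stabilizing controller): exponential decay of the stage
cost along the κ-closed loop and constraint satisfaction, locally (`ℓ_min(x) ≤ ε`). -/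
def Assumption2 {n m : ℕ} (f : Vec n → Vec m → Vec n) (κ : Vec n → Vec m)
    (ℓ : Vec n → Vec m → ℝ) (Z : Set (Vec n × Vec m)) (Uset : Set (Vec m))
    (ρ C ε : ℝ) : Prop :=
  ρ ∈ Set.Ico (0 : ℝ) 1 ∧ 1 ≤ C ∧ 0 < ε ∧
    ∀ x : Vec n, lmin ℓ Uset x ≤ ε → ∀ k : ℕ,
      ℓ (phiX f κ x k) (κ (phiX f κ x k)) ≤ C * ρ ^ k * lmin ℓ Uset x ∧
      (phiX f κ x k, κ (phiX f κ x k)) ∈ Z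

/-- A class-`K∞` function: continuous, strictly increasing and unbounded on `[0,∞)`
with `α(0) = 0`. -/
def IsKInfty (α : ℝ → ℝ) : Prop :=
  ContinuousOn α (Set.Ici 0) ∧ StrictMonoOn α (Set.Ici 0) ∧ α 0 = 0 ∧
    Tendsto α atTop atTop

lemma phiX_add {n m : ℕ} (f : Vec n → Vec m → Vec n) (κ : Vec n → Vec m)
    (x : Vec n) (k : ℕ) : ∀ j : ℕ, phiX f κ (phiX f κ x k) j = phiX f κ x (k + j)
  | 0 => rfl
  | j + 1 => by
    show f (phiX f κ (phiX f κ x k) j) _ = f (phiX f κ x (k + j)) _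
    rw [phiX_add f κ x k j]
    rfl

/-- Proposition 2, eq. (4c): under Assumption 2 with `ρ > 0`, for `M ≥ 1`
and any `x` with `ℓ_min(x) ≤ ε` and `V_{f,M}(x) ≤ ε`,
`V_{f,M+1}(x) ≤ (1 + c_M) V_{f,M}(x)` with `c_M = C ρ^M (1 - ρ)/(1 - ρ^M)`. -/
theorem finite_tail_cost_relative_increment {n m : ℕ}
    (f : Vec n → Vec m → Vec n) (κ : Vec n → Vec m) (ℓ : Vec n → Vec m → ℝ)
    (Z : Set (Vec n × Vec m)) (Uset : Set (Vec m)) (ρ C ε : ℝ)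
    (hf : Continuous fun p : Vec n × Vec m => f p.1 p.2)
    (hℓ : Continuous fun p : Vec n × Vec m => ℓ p.1 p.2) (hℓ0 : ∀ x u, 0 ≤ ℓ x u)
    (hU : IsCompact Uset) (hκ : Continuous κ) (hκU : ∀ x, κ x ∈ Uset)
    (hA2 : Assumption2 f κ ℓ Z Uset ρ C ε) (hρ : 0 < ρ) :
    ∀ (M : ℕ), 1 ≤ M → ∀ x : Vec n, lmin ℓ Uset x ≤ ε →
      Vtail f κ ℓ Z M x ≤ ENNReal.ofReal ε →
      Vtail f κ ℓ Z (M + 1) x ≤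
        ENNReal.ofReal (1 + C * ρ ^ M * (1 - ρ) / (1 - ρ ^ M)) * Vtail f κ ℓ Z M x := by
  intro M hM x hx hV
  obtain ⟨⟨hρ0, hρ1⟩, hC, hε, hA⟩ := hA2
  have hZall : ∀ k, (phiX f κ x k, κ (phiX f κ x k)) ∈ Z := fun k => (hA x hx k).2
  set L : ℕ → ℝ := fun k => ℓ (phiX f κ x k) (κ (phiX f κ x k)) with hLdef
  have hL0 : ∀ k, 0 ≤ L k := fun k => hℓ0 _ _
  set S : ℝ := ∑ k ∈ Finset.range M, L k with hSdef
  have hS0 : 0 ≤ S := Finset.sum_nonneg fun k _ => hL0 k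
  have hVM : Vtail f κ ℓ Z M x = ENNReal.ofReal S := by
    simp only [Vtail]
    rw [if_pos fun k _ => hZall k]
  have hVM1 : Vtail f κ ℓ Z (M + 1) x = ENNReal.ofReal (S + L M) := by
    simp only [Vtail]
    rw [if_pos fun k _ => hZall k, Finset.sum_range_succ]
  have hSε : S ≤ ε := by
    rw [hVM] at hV
    exact (ENNReal.ofReal_le_ofReal_iff hε.le).mp hV
  have hLleS : ∀ k < M, L k ≤ S :=
    fun k hk => Finset.single_le_sum (fun j _ => hL0 j) (Finset.mem_range.mpr hk)
  have hlminle : ∀ k, lmin ℓ Uset (phiX f κ x k) ≤ L k := fun k =>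
    csInf_le ⟨0, fun y ⟨u, _, hu⟩ => hu ▸ hℓ0 _ _⟩
      ⟨κ (phiX f κ x k), hκU _, rfl⟩
  have hlmin0 : ∀ k, 0 ≤ lmin ℓ Uset (phiX f κ x k) := fun k =>
    Real.sInf_nonneg fun y ⟨u, _, hu⟩ => hu ▸ hℓ0 _ _
  have h1ρ : 0 < 1 - ρ := by linarith
  have h1ρM : 0 < 1 - ρ ^ M := by
    have := pow_lt_one₀ hρ0 hρ1 (by omega : M ≠ 0)
    linarith
  have hC0 : 0 < C := by linarith
  set c : ℝ := C * ρ ^ M * (1 - ρ) / (1 - ρ ^ M) with hcdef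
  have hc0 : 0 ≤ c :=
    div_nonneg (mul_nonneg (mul_nonneg hC0.le (by positivity)) h1ρ.le) h1ρM.le
  -- key step inequality
  have hstep : ∀ k < M, ρ ^ k * L M ≤ C * ρ ^ M * L k := by
    intro k hk
    have hmink : lmin ℓ Uset (phiX f κ x k) ≤ ε :=
      le_trans (hlminle k) (le_trans (hLleS k hk) hSε)
    have h := (hA (phiX f κ x k) hmink (M - k)).1
    rw [phiX_add, Nat.add_sub_cancel' hk.le] at h
    have h2 : L M ≤ C * ρ ^ (M - k) * L k :=
      le_trans h (mul_le_mul_of_nonneg_left (hlminle k) (by positivity))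
    have hpow : ρ ^ k * ρ ^ (M - k) = ρ ^ M := by
      rw [← pow_add, Nat.add_sub_cancel' hk.le]
    calc ρ ^ k * L M ≤ ρ ^ k * (C * ρ ^ (M - k) * L k) := by
          exact mul_le_mul_of_nonneg_left h2 (by positivity)
      _ = C * ρ ^ M * L k := by rw [← hpow]; ring
  set G : ℝ := ∑ k ∈ Finset.range M, ρ ^ k with hGdef
  have hGeq : G = (1 - ρ ^ M) / (1 - ρ) := by
    rw [hGdef, geom_sum_eq hρ1.ne]
    rw [div_eq_div_iff (by linarith) (by linarith)]
    ring
  have hGpos : 0 < G := by rw [hGeq]; positivity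
  have hcG : c * G = C * ρ ^ M := by
    rw [hGeq, hcdef]
    field_simp
  have hsum : G * L M ≤ C * ρ ^ M * S := by
    have h := Finset.sum_le_sum fun k hk => hstep k (Finset.mem_range.mp hk)
    calc G * L M = ∑ k ∈ Finset.range M, ρ ^ k * L M := by rw [Finset.sum_mul]
      _ ≤ ∑ k ∈ Finset.range M, C * ρ ^ M * L k := h
      _ = C * ρ ^ M * S := by rw [hSdef, Finset.mul_sum]
  have hkey : L M ≤ c * S := by
    have : G * L M ≤ G * (c * S) := by
      rw [show G * (c * S) = c * G * S by ring, hcG]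
      exact hsum
    exact le_of_mul_le_mul_left this hGpos
  rw [hVM, hVM1, ← ENNReal.ofReal_mul (by linarith : (0:ℝ) ≤ 1 + c)]
  exact ENNReal.ofReal_le_ofReal (by nlinarith)
end
end

section
/- Under Assumption 2, let N ≥ 1, M ≥ 1, let x ∈ ℝⁿ have a minimizing input sequence u*(·) for V_{N,M}(x) with state trajectory x*(·), and suppose ℓ_min(x*(N)) ≤ ε. Then the shifted candidate solution (appending the feedback κ) yields V_{N,M}(f(x, u*(0))) ≤ V_{N,M}(x) − ℓ(x, u*(0)) + V_{f,M+1}(x*(N)) − V_{f,M}(x*(N)). -/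
open Finset Filter
open scoped ENNReal

noncomputable section

open scoped Classical

lemma phiX_shift {n m : ℕ} (f : Vec n → Vec m → Vec n) (κ : Vec n → Vec m)
    (x : Vec n) : ∀ k, phiX f κ (f x (κ x)) k = phiX f κ x (k + 1)
  | 0 => rfl
  | k + 1 => by
      show f (phiX f κ (f x (κ x)) k) _ = f (phiX f κ x (k+1)) _
      rw [phiX_shift f κ x k]

/-- candidate-solution decrease: under Assumption 2, if `u*` is a
minimizing sequence for `V_{N,M}(x)` with trajectory `x*` and `ℓ_min(x*(N)) ≤ ε`, then
shifting and appending the feedback `κ` yields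
`V_{N,M}(f(x,u*(0))) ≤ V_{N,M}(x) - ℓ(x,u*(0)) + V_{f,M+1}(x*(N)) - V_{f,M}(x*(N))`
(stated additively, all involved terms being finite). -/
theorem shifted_candidate_decrease {n m : ℕ}
    (f : Vec n → Vec m → Vec n) (κ : Vec n → Vec m) (ℓ : Vec n → Vec m → ℝ)
    (Z : Set (Vec n × Vec m)) (Uset : Set (Vec m)) (ρ C ε : ℝ)
    (hf : Continuous fun p : Vec n × Vec m => f p.1 p.2)
    (hℓ : Continuous fun p : Vec n × Vec m => ℓ p.1 p.2) (hℓ0 : ∀ x u, 0 ≤ ℓ x u)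
    (hU : IsCompact Uset) (hκ : Continuous κ) (hκU : ∀ x, κ x ∈ Uset)
    (hA2 : Assumption2 f κ ℓ Z Uset ρ C ε)
    (N M : ℕ) (hN : 1 ≤ N) (hM : 1 ≤ M) (x : Vec n)
    (u : ℕ → Vec m) (hu : IsMinimizer f κ ℓ Z Uset N M x u)
    (hterm : lmin ℓ Uset (traj f x u N) ≤ ε) :
    Vmpc f κ ℓ Z Uset N M (f x (u 0)) + ENNReal.ofReal (ℓ x (u 0)) +
        Vtail f κ ℓ Z M (traj f x u N) ≤
      Vmpc f κ ℓ Z Uset N M x + Vtail f κ ℓ Z (M + 1) (traj f x u N) := by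
  obtain ⟨hfeas, hval⟩ := hu
  obtain ⟨hρ, hC, hε, hA⟩ := hA2
  obtain ⟨N', rfl⟩ : ∃ N', N = N' + 1 := ⟨N - 1, (Nat.succ_pred_eq_of_pos hN).symm⟩
  set xN := traj f x u (N' + 1) with hxN
  have hA' := hA xN hterm
  -- shifted candidate input sequence
  set v : ℕ → Vec m := fun k => if k < N' then u (k + 1) else κ xN with hv
  have htrajv : ∀ k, k ≤ N' → traj f (f x (u 0)) v k = traj f x u (k + 1) := by
    intro k
    induction k with
    | zero => intro _; simp [traj]
    | succ k ih =>
        intro hk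
        have hk' : k < N' := hk
        show f (traj f (f x (u 0)) v k) (v k) = f (traj f x u (k + 1)) (u (k + 1))
        rw [ih (le_of_lt hk'), hv]
        simp [hk']
  have htrajvN : traj f (f x (u 0)) v (N' + 1) = f xN (κ xN) := by
    show f (traj f (f x (u 0)) v N') (v N') = f xN (κ xN)
    rw [htrajv N' le_rfl, hv]
    simp [hxN]
  -- feasibility of the candidate
  have hfeasv : Feasible f Z Uset (N' + 1) (f x (u 0)) v := by
    intro k hk
    rcases lt_or_ge k N' with hkN | hkN
    · have h1 := hfeas (k + 1) (by omega)
      have hvk : v k = u (k + 1) := by simp [hv, hkN]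
      rw [hvk, htrajv k (le_of_lt hkN)]
      exact h1
    · have hkN' : k = N' := by omega
      have hvk : v k = κ xN := by rw [hv]; exact if_neg (by omega)
      rw [hvk, hkN', htrajv N' le_rfl]
      refine ⟨hκU _, ?_⟩
      have := (hA' 0).2
      simpa [phiX] using this
  -- Vmpc at the successor state is at most the candidate cost
  have hVle : Vmpc f κ ℓ Z Uset (N' + 1) M (f x (u 0)) ≤
      Jcost f κ ℓ Z (N' + 1) M (f x (u 0)) v := by
    exact iInf₂_le v hfeasv
  -- Vtail values are all finite with explicit sums
  have hVtailM : Vtail f κ ℓ Z M xN =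
      ENNReal.ofReal (∑ k ∈ Finset.range M, ℓ (phiX f κ xN k) (κ (phiX f κ xN k))) := by
    rw [Vtail, if_pos]
    intro k _; exact (hA' k).2
  have hVtailM1 : Vtail f κ ℓ Z (M + 1) xN =
      ENNReal.ofReal (∑ k ∈ Finset.range (M + 1), ℓ (phiX f κ xN k) (κ (phiX f κ xN k))) := by
    rw [Vtail, if_pos]
    intro k _; exact (hA' k).2
  have hVtailshift : Vtail f κ ℓ Z M (f xN (κ xN)) =
      ENNReal.ofReal (∑ k ∈ Finset.range M,
        ℓ (phiX f κ xN (k + 1)) (κ (phiX f κ xN (k + 1)))) := by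
    rw [Vtail, if_pos]
    · congr 1
      refine Finset.sum_congr rfl fun k _ => ?_
      rw [phiX_shift]
    · intro k _
      rw [phiX_shift]
      exact (hA' (k + 1)).2
  -- the key cost identity
  have key : Jcost f κ ℓ Z (N' + 1) M (f x (u 0)) v + ENNReal.ofReal (ℓ x (u 0)) +
      Vtail f κ ℓ Z M xN =
      Jcost f κ ℓ Z (N' + 1) M x u + Vtail f κ ℓ Z (M + 1) xN := by
    rw [Jcost, Jcost, htrajvN, hVtailshift, hVtailM, hVtailM1]
    have nn : ∀ (s : Finset ℕ) (g : ℕ → ℝ), (∀ k, 0 ≤ g k) → 0 ≤ ∑ k ∈ s, g k :=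
      fun s g hg => Finset.sum_nonneg fun k _ => hg k
    rw [← ENNReal.ofReal_add (nn _ _ fun k => hℓ0 _ _) (nn _ _ fun k => hℓ0 _ _),
        ← ENNReal.ofReal_add (add_nonneg (nn _ _ fun k => hℓ0 _ _) (nn _ _ fun k => hℓ0 _ _)) (hℓ0 _ _),
        ← ENNReal.ofReal_add (add_nonneg (add_nonneg (nn _ _ fun k => hℓ0 _ _) (nn _ _ fun k => hℓ0 _ _)) (hℓ0 _ _)) (nn _ _ fun k => hℓ0 _ _),
        ← ENNReal.ofReal_add (nn _ _ fun k => hℓ0 _ _) (nn _ _ fun k => hℓ0 _ _),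
        ← ENNReal.ofReal_add (add_nonneg (nn _ _ fun k => hℓ0 _ _) (nn _ _ fun k => hℓ0 _ _)) (nn _ _ fun k => hℓ0 _ _)]
    congr 1
    have hsumv : ∑ k ∈ Finset.range (N' + 1), ℓ (traj f (f x (u 0)) v k) (v k) =
        (∑ k ∈ Finset.range N', ℓ (traj f x u (k + 1)) (u (k + 1))) + ℓ xN (κ xN) := by
      rw [Finset.sum_range_succ]
      congr 1
      · refine Finset.sum_congr rfl fun k hk => ?_
        have hk' : k < N' := Finset.mem_range.mp hk
        rw [htrajv k (le_of_lt hk'), hv]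
        simp [hk']
      · rw [htrajv N' le_rfl, hv]
        simp [hxN]
    have hsumu : ∑ k ∈ Finset.range (N' + 1), ℓ (traj f x u k) (u k) =
        (∑ k ∈ Finset.range N', ℓ (traj f x u (k + 1)) (u (k + 1))) + ℓ x (u 0) := by
      rw [Finset.sum_range_succ']
      simp [traj]
    have hsumtail : ∑ k ∈ Finset.range (M + 1), ℓ (phiX f κ xN k) (κ (phiX f κ xN k)) =
        (∑ k ∈ Finset.range M,
          ℓ (phiX f κ xN (k + 1)) (κ (phiX f κ xN (k + 1)))) + ℓ xN (κ xN) := by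
      rw [Finset.sum_range_succ']
      simp [phiX]
    rw [hsumv, hsumu, hsumtail]
    ring
  calc Vmpc f κ ℓ Z Uset (N' + 1) M (f x (u 0)) + ENNReal.ofReal (ℓ x (u 0)) +
        Vtail f κ ℓ Z M xN
      ≤ Jcost f κ ℓ Z (N' + 1) M (f x (u 0)) v + ENNReal.ofReal (ℓ x (u 0)) +
        Vtail f κ ℓ Z M xN := by gcongr
    _ = Jcost f κ ℓ Z (N' + 1) M x u + Vtail f κ ℓ Z (M + 1) xN := key
    _ = Vmpc f κ ℓ Z Uset (N' + 1) M x + Vtail f κ ℓ Z (M + 1) xN := by rw [hval]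
end
end
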